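/- Let u : ℝ → ℝ be twice differentiable on [0, ∞), bounded on [0, ∞), with u''(x) = 2x·u(x) for all x ≥ 0 and u(0) = 1. Then u(x) > 0 and u'(x) < 0 for every x ≥ 0, u(x) → 0 as x → ∞, and u'(x) → 0 as x → ∞. -/

import Mathlib

open MeasureTheory Filter

open Topology

/-- the bounded solution of `u'' = 2xu` on `[0,∞)` with
`u(0) = 1` satisfies `u > 0` and `u' < 0` on `[0,∞)`, and `u(x) → 0`,
`u'(x) → 0` as `x → ∞`. -/
theorem statement15 (u u' : ℝ → ℝ)
    (hd : ∀ x ∈ Set.Ici (0 : ℝ), HasDerivWithinAt u (u' x) (Set.Ici 0) x)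
    (hd' : ∀ x ∈ Set.Ici (0 : ℝ), HasDerivWithinAt u' (2 * x * u x) (Set.Ici 0) x)
    (hb : ∃ C : ℝ, ∀ x ∈ Set.Ici (0 : ℝ), |u x| ≤ C)
    (h0 : u 0 = 1) :
    (∀ x ∈ Set.Ici (0 : ℝ), 0 < u x ∧ u' x < 0) ∧
      Filter.Tendsto u Filter.atTop (nhds 0) ∧
      Filter.Tendsto u' Filter.atTop (nhds 0) := by
  obtain ⟨C, hC⟩ := hb
  have hcu : ContinuousOn u (Set.Ici 0) := fun x hx => (hd x hx).continuousWithinAt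
  have hcu' : ContinuousOn u' (Set.Ici 0) := fun x hx => (hd' x hx).continuousWithinAt
  have hu : ∀ x : ℝ, 0 < x → HasDerivAt u (u' x) x :=
    fun x hx => (hd x hx.le).hasDerivAt (Ici_mem_nhds hx)
  have hu' : ∀ x : ℝ, 0 < x → HasDerivAt u' (2 * x * u x) x :=
    fun x hx => (hd' x hx.le).hasDerivAt (Ici_mem_nhds hx)
  set g : ℝ → ℝ := fun x => u x * u' x with hgdef
  have hcg : ContinuousOn g (Set.Ici 0) := hcu.mul hcu'
  have hgd : ∀ x : ℝ, 0 < x → HasDerivAt g (u' x * u' x + u x * (2 * x * u x)) x :=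
    fun x hx => (hu x hx).mul (hu' x hx)
  have hIccIci : ∀ a b : ℝ, 0 ≤ a → Set.Icc a b ⊆ Set.Ici 0 :=
    fun a b ha => Set.Icc_subset_Ici_self.trans (Set.Ici_subset_Ici.mpr ha)
  -- g is monotone on [0,∞)
  have hg_mono : MonotoneOn g (Set.Ici 0) := by
    apply monotoneOn_of_deriv_nonneg (convex_Ici 0) hcg
    · intro x hx
      rw [interior_Ici] at hx
      exact (hgd x hx).differentiableAt.differentiableWithinAt
    · intro x hx
      rw [interior_Ici] at hx
      rw [(hgd x hx).deriv]
      nlinarith [mul_self_nonneg (u' x), mul_self_nonneg (u x), (Set.mem_Ioi.mp hx).le]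
  -- g ≤ 0 on [0,∞)
  have g_nonpos : ∀ x ∈ Set.Ici (0 : ℝ), g x ≤ 0 := by
    intro a ha
    by_contra hpos
    push_neg at hpos
    set X := a + (C * C + 1) / (2 * g a) with hX
    have hXa : a < X := by
      have : 0 < (C * C + 1) / (2 * g a) := by
        apply div_pos _ (by linarith)
        nlinarith [mul_self_nonneg C]
      rw [hX]; linarith
    have hXmem : X ∈ Set.Ici (0 : ℝ) := le_trans ha hXa.le
    obtain ⟨c, hc, hceq⟩ := exists_hasDerivAt_eq_slope (fun x => u x * u x)
      (fun x => u' x * u x + u x * u' x) hXa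
      ((hcu.mono (hIccIci a X ha)).mul (hcu.mono (hIccIci a X ha)))
      (fun x hx => (hu x (lt_of_le_of_lt ha hx.1)).mul (hu x (lt_of_le_of_lt ha hx.1)))
    have hkey : (u' c * u c + u c * u' c) * (X - a) = u X * u X - u a * u a := by
      rw [hceq, div_mul_cancel₀ _ (sub_ne_zero.mpr hXa.ne')]
    have h1 : g a ≤ g c := hg_mono ha (le_trans ha hc.1.le) hc.1.le
    have h3 : 2 * g a * (X - a) = C * C + 1 := by
      have hga : g a ≠ 0 := ne_of_gt hpos
      rw [hX]
      field_simp
      ring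
    have h4 : u X * u X ≤ C * C := by
      nlinarith [hC X hXmem, abs_nonneg (u X), abs_mul_abs_self (u X)]
    have h5 : u' c * u c + u c * u' c = 2 * g c := by rw [hgdef]; ring
    nlinarith [mul_self_nonneg (u a), sub_pos.mpr hXa]
  -- u > 0 on [0,∞)
  have upos : ∀ x ∈ Set.Ici (0 : ℝ), 0 < u x := by
    by_contra hcon
    push_neg at hcon
    obtain ⟨a, ha, hua⟩ := hcon
    set Z : Set ℝ := Set.Ici 0 ∩ u ⁻¹' Set.Iic 0 with hZ
    have hZne : Z.Nonempty := ⟨a, ha, hua⟩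
    have hZclosed : IsClosed Z :=
      hcu.preimage_isClosed_of_isClosed isClosed_Ici isClosed_Iic
    have hZbdd : BddBelow Z := ⟨0, fun x hx => hx.1⟩
    set a₀ := sInf Z with ha₀def
    have ha₀Z : a₀ ∈ Z := hZclosed.csInf_mem hZne hZbdd
    have ha₀ : (0 : ℝ) ≤ a₀ := ha₀Z.1
    have hua₀le : u a₀ ≤ 0 := ha₀Z.2
    have hposlt : ∀ x : ℝ, 0 ≤ x → x < a₀ → 0 < u x := by
      intro x hx hxa
      by_contra h
      push_neg at h
      exact absurd (csInf_le hZbdd ⟨hx, h⟩) (not_le.2 hxa)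
    have ha₀pos : 0 < a₀ := by
      rcases ha₀.lt_or_eq with h | h
      · exact h
      · exfalso; rw [← h, h0] at hua₀le; linarith
    have hNB : (𝓝[Set.Ico 0 a₀] a₀).NeBot := by
      rw [← mem_closure_iff_nhdsWithin_neBot, closure_Ico (ne_of_lt ha₀pos)]
      exact Set.right_mem_Icc.2 ha₀
    have hIcoIci : Set.Ico (0:ℝ) a₀ ⊆ Set.Ici 0 := Set.Ico_subset_Ici_self
    have hu0 : 0 ≤ u a₀ := by
      have ht : Filter.Tendsto u (𝓝[Set.Ico 0 a₀] a₀) (𝓝 (u a₀)) :=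
        ((hcu a₀ ha₀).mono hIcoIci)
      refine ge_of_tendsto ht ?_
      filter_upwards [eventually_mem_nhdsWithin] with x hx
      exact (hposlt x hx.1 hx.2).le
    have hu'0 : u' a₀ ≤ 0 := by
      have ht : Filter.Tendsto u' (𝓝[Set.Ico 0 a₀] a₀) (𝓝 (u' a₀)) :=
        ((hcu' a₀ ha₀).mono hIcoIci)
      refine le_of_tendsto ht ?_
      filter_upwards [eventually_mem_nhdsWithin] with x hx
      have hgx : u x * u' x ≤ 0 := g_nonpos x hx.1
      have hux := hposlt x hx.1 hx.2
      nlinarith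
    have hua₀ : u a₀ = 0 := le_antisymm hua₀le hu0
    rcases hu'0.lt_or_eq with hlt | heq
    · -- u' a₀ < 0: find b > a₀ with u b < 0, u' b < 0
      have hev : u' ⁻¹' Set.Iio 0 ∈ 𝓝[Set.Ici 0] a₀ :=
        (hcu' a₀ ha₀) (Iio_mem_nhds hlt)
      rw [Metric.mem_nhdsWithin_iff] at hev
      obtain ⟨ε, hε, hball⟩ := hev
      set b := a₀ + ε / 2 with hbdef
      have hab : a₀ < b := by simp [hbdef]; linarith
      have hmem : ∀ x : ℝ, a₀ ≤ x → x ≤ b → u' x < 0 := by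
        intro x hx1 hx2
        apply hball
        constructor
        · rw [Metric.mem_ball, Real.dist_eq, abs_lt]
          constructor <;> [linarith; linarith [hbdef ▸ hx2]]
        · exact le_trans ha₀ hx1
      obtain ⟨c, hc, hceq⟩ := exists_hasDerivAt_eq_slope u u' hab
        (hcu.mono (hIccIci a₀ b ha₀))
        (fun x hx => hu x (lt_of_le_of_lt ha₀ hx.1))
      have hub : u b < 0 := by
        have hc' : u' c < 0 := hmem c hc.1.le hc.2.le
        have : u' c * (b - a₀) = u b - u a₀ := by
          rw [hceq, div_mul_cancel₀ _ (sub_ne_zero.mpr hab.ne')]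
        nlinarith [sub_pos.mpr hab]
      have hu'b : u' b < 0 := hmem b hab.le le_rfl
      have hgb : u b * u' b ≤ 0 := g_nonpos b (le_trans ha₀ hab.le)
      nlinarith
    · -- u' a₀ = 0: Grönwall-type argument
      set K := 1 + 2 * a₀ with hK
      set G : ℝ → ℝ := fun x => u x * u x + u' x * u' x with hG
      set H : ℝ → ℝ := fun x => Real.exp (K * x) * G x with hH
      have hGd : ∀ x : ℝ, 0 < x →
          HasDerivAt G (u' x * u x + u x * u' x + ((2 * x * u x) * u' x + u' x * (2 * x * u x))) x :=
        fun x hx => ((hu x hx).mul (hu x hx)).add ((hu' x hx).mul (hu' x hx))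
      have hHd : ∀ x : ℝ, 0 < x →
          HasDerivAt H ((K * Real.exp (K * x)) * G x +
            Real.exp (K * x) * (u' x * u x + u x * u' x + ((2 * x * u x) * u' x + u' x * (2 * x * u x)))) x := by
        intro x hx
        have h1 : HasDerivAt (fun y : ℝ => Real.exp (K * y)) (K * Real.exp (K * x)) x := by
          simpa [mul_comm] using (((hasDerivAt_id x).const_mul K).exp)
        exact h1.mul (hGd x hx)
      have hHmono : MonotoneOn H (Set.Icc 0 a₀) := by
        apply monotoneOn_of_deriv_nonneg (convex_Icc 0 a₀)
        · apply ContinuousOn.mul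
          · exact (Real.continuous_exp.comp (continuous_const.mul continuous_id)).continuousOn
          · exact ((hcu.mul hcu).add (hcu'.mul hcu')).mono (hIccIci 0 a₀ le_rfl)
        · intro x hx
          rw [interior_Icc] at hx
          exact (hHd x hx.1).differentiableAt.differentiableWithinAt
        · intro x hx
          rw [interior_Icc] at hx
          rw [(hHd x hx.1).deriv]
          have hexp : 0 < Real.exp (K * x) := Real.exp_pos _
          have hfac : Real.exp (K * x) * ((K * G x) +
              (u' x * u x + u x * u' x + ((2 * x * u x) * u' x + u' x * (2 * x * u x)))) =
              (K * Real.exp (K * x)) * G x +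
              Real.exp (K * x) * (u' x * u x + u x * u' x + ((2 * x * u x) * u' x + u' x * (2 * x * u x))) := by ring
          rw [← hfac]
          apply mul_nonneg hexp.le
          have h1 : 0 ≤ x := hx.1.le
          have h2 : x ≤ a₀ := hx.2.le
          simp only [hK, hG]
          nlinarith [mul_nonneg (by linarith : (0:ℝ) ≤ 1 + 2 * x) (sq_nonneg (u x + u' x)),
            mul_nonneg (by linarith : (0:ℝ) ≤ a₀ - x)
              (add_nonneg (mul_self_nonneg (u x)) (mul_self_nonneg (u' x)))]
      have hH0 : H 0 ≤ H a₀ := hHmono (Set.left_mem_Icc.2 ha₀) (Set.right_mem_Icc.2 ha₀) ha₀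
      have hHa₀ : H a₀ = 0 := by
        rw [hH]; simp [hG, hua₀, heq]
      have hH0val : (1 : ℝ) ≤ H 0 := by
        rw [hH]
        simp only [hG, mul_zero, Real.exp_zero, one_mul, h0]
        nlinarith [mul_self_nonneg (u' 0)]
      linarith
  -- u' ≤ 0 then u' < 0
  have u'nonpos : ∀ x ∈ Set.Ici (0 : ℝ), u' x ≤ 0 := by
    intro x hx
    have hgx : u x * u' x ≤ 0 := g_nonpos x hx
    nlinarith [hgx, upos x hx]
  have u'neg : ∀ x ∈ Set.Ici (0 : ℝ), u' x < 0 := by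
    intro b hb
    rcases (u'nonpos b hb).lt_or_eq with h | h
    · exact h
    · exfalso
      have hg_strict : StrictMonoOn g (Set.Icc b (b + 1)) := by
        apply strictMonoOn_of_deriv_pos (convex_Icc _ _) (hcg.mono (hIccIci b (b+1) hb))
        intro x hx
        rw [interior_Icc] at hx
        have hx0 : 0 < x := lt_of_le_of_lt hb hx.1
        rw [(hgd x hx0).deriv]
        nlinarith [mul_pos (mul_pos hx0 (upos x hx0.le)) (upos x hx0.le), mul_self_nonneg (u' x)]
      have h1 : g b < g (b + 1) :=
        hg_strict ⟨le_refl b, by linarith⟩ ⟨by linarith, le_refl _⟩ (by linarith)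
      have h2 : g b = 0 := by show u b * u' b = 0; rw [h, mul_zero]
      have hb' : (0:ℝ) ≤ b := hb
      have h3 := g_nonpos (b + 1) (by simp only [Set.mem_Ici]; linarith)
      linarith
  -- monotonicity of u and u'
  have hu_anti : AntitoneOn u (Set.Ici 0) := by
    apply antitoneOn_of_deriv_nonpos (convex_Ici 0) hcu
    · intro x hx
      rw [interior_Ici] at hx
      exact (hu x hx).differentiableAt.differentiableWithinAt
    · intro x hx
      rw [interior_Ici] at hx
      rw [(hu x hx).deriv]
      exact (u'neg x (Set.mem_Ioi.mp hx).le).le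
  have hu'_mono : MonotoneOn u' (Set.Ici 0) := by
    apply monotoneOn_of_deriv_nonneg (convex_Ici 0) hcu'
    · intro x hx
      rw [interior_Ici] at hx
      exact (hu' x hx).differentiableAt.differentiableWithinAt
    · intro x hx
      rw [interior_Ici] at hx
      rw [(hu' x hx).deriv]
      have := upos x (Set.mem_Ici.2 hx.le)
      nlinarith [mul_pos hx this]
  -- limit of u
  set v : ℝ → ℝ := fun x => u (max x 0) with hv
  have hv_anti : Antitone v := fun x y hxy =>
    hu_anti (le_max_right x 0) (le_max_right y 0) (max_le_max hxy le_rfl)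
  have hv_bdd : BddBelow (Set.range v) := by
    refine ⟨0, ?_⟩
    rintro y ⟨x, rfl⟩
    exact (upos _ (le_max_right x 0)).le
  set L := ⨅ x, v x with hL
  have hvt : Filter.Tendsto v Filter.atTop (𝓝 L) := tendsto_atTop_ciInf hv_anti hv_bdd
  have hveq : v =ᶠ[Filter.atTop] u := by
    filter_upwards [Filter.eventually_ge_atTop (0:ℝ)] with x hx
    simp [hv, max_eq_left hx]
  have hut : Filter.Tendsto u Filter.atTop (𝓝 L) := hvt.congr' hveq
  have hL0 : 0 ≤ L := le_ciInf fun x => (upos _ (le_max_right x 0)).le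
  have hLle : ∀ x : ℝ, 0 ≤ x → L ≤ u x := by
    intro x hx
    have := ciInf_le hv_bdd x
    rwa [show v x = u x by simp [hv, max_eq_left hx]] at this
  have hLzero : L = 0 := by
    by_contra hLne
    have hLpos : 0 < L := lt_of_le_of_ne hL0 (Ne.symm hLne)
    set X := 1 + (1 + |u' 1|) / (2 * L) with hXdef
    have hX1 : (1 : ℝ) < X := by
      have : 0 < (1 + |u' 1|) / (2 * L) := by positivity
      rw [hXdef]; linarith
    obtain ⟨c, hc, hceq⟩ := exists_hasDerivAt_eq_slope u' (fun x => 2 * x * u x) hX1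
      (hcu'.mono (hIccIci 1 X (by norm_num)))
      (fun x hx => hu' x (by linarith [hx.1]))
    have hkey : 2 * c * u c * (X - 1) = u' X - u' 1 := by
      rw [hceq, div_mul_cancel₀ _ (sub_ne_zero.mpr hX1.ne')]
    have hc1 : (1:ℝ) < c := hc.1
    have hucL : L ≤ u c := hLle c (by linarith)
    have h2L : 2 * L * (X - 1) = 1 + |u' 1| := by
      have : X - 1 = (1 + |u' 1|) / (2 * L) := by rw [hXdef]; ring
      rw [this]
      field_simp
    have habs : -|u' 1| ≤ u' 1 := neg_abs_le _
    have hu'X : u' X < 0 := u'neg X (by simp only [Set.mem_Ici]; linarith)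
    have hXm : 0 < X - 1 := sub_pos.mpr hX1
    have hucpos : 0 < u c := lt_of_lt_of_le hLpos hucL
    have hcgeL : 2 * L ≤ 2 * c * u c := by
      nlinarith [mul_nonneg (by linarith : (0:ℝ) ≤ c - 1) hucpos.le]
    have hmul : 2 * L * (X - 1) ≤ 2 * c * u c * (X - 1) :=
      mul_le_mul_of_nonneg_right hcgeL hXm.le
    linarith
  -- limit of u'
  set w : ℝ → ℝ := fun x => u' (max x 0) with hw
  have hw_mono : Monotone w := fun x y hxy =>
    hu'_mono (le_max_right x 0) (le_max_right y 0) (max_le_max hxy le_rfl)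
  have hw_bdd : BddAbove (Set.range w) := by
    refine ⟨0, ?_⟩
    rintro y ⟨x, rfl⟩
    exact (u'neg _ (le_max_right x 0)).le
  set M := ⨆ x, w x with hM
  have hwt : Filter.Tendsto w Filter.atTop (𝓝 M) := tendsto_atTop_ciSup hw_mono hw_bdd
  have hweq : w =ᶠ[Filter.atTop] u' := by
    filter_upwards [Filter.eventually_ge_atTop (0:ℝ)] with x hx
    simp [hw, max_eq_left hx]
  have hu't : Filter.Tendsto u' Filter.atTop (𝓝 M) := hwt.congr' hweq
  have hM0 : M ≤ 0 := ciSup_le fun x => (u'neg _ (le_max_right x 0)).le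
  have hMzero : M = 0 := by
    by_contra hMne
    have hMneg : M < 0 := lt_of_le_of_ne hM0 hMne
    have hMle : ∀ x : ℝ, 0 ≤ x → u' x ≤ M := by
      intro x hx
      have := le_ciSup hw_bdd x
      rwa [show w x = u' x by simp [hw, max_eq_left hx]] at this
    set X := 2 / (-M) with hXdef
    have hXpos : 0 < X := by
      rw [hXdef]; exact div_pos (by norm_num) (by linarith)
    obtain ⟨c, hc, hceq⟩ := exists_hasDerivAt_eq_slope u u' hXpos
      (hcu.mono (hIccIci 0 X le_rfl))
      (fun x hx => hu x hx.1)
    have hkey : u' c * (X - 0) = u X - u 0 := by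
      rw [hceq, div_mul_cancel₀ _ (sub_ne_zero.mpr hXpos.ne')]
    have hMne' : M ≠ 0 := ne_of_lt hMneg
    have hMX : M * X = -2 := by
      rw [hXdef]; field_simp
    have hcle : u' c ≤ M := hMle c hc.1.le
    have huX : 0 < u X := upos X hXpos.le
    rw [h0, sub_zero] at hkey
    nlinarith
  constructor
  · intro x hx
    exact ⟨upos x hx, u'neg x hx⟩
  · exact ⟨hLzero ▸ hut, hMzero ▸ hu't⟩
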